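/- arXiv:1712.07444 — 2 statements merged into one kernel-verified Lean document; each statement's English description precedes it below -/
import Mathlib

section
/- Let Q be a finite quiver and a an arrow. Then End_{KQ}(C(a)) = K, where C(a) = KQe_{t(a)}/KQa. -/
open Quiver

universe w v u

/-- A representation of a quiver `V` over a field `K`: a vector space at each vertex
and a linear map for each arrow. -/
structure QRep (K : Type u) [Field K] (V : Type v) [Quiver.{v+1} V] where
  space : V → Type w
  [isAddCommGroup : ∀ i, AddCommGroup (space i)]
  [isModule : ∀ i, Module K (space i)]
  map : ∀ {i j : V}, (i ⟶ j) → (space i →ₗ[K] space j)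

attribute [instance] QRep.isAddCommGroup QRep.isModule

/-- A morphism of quiver representations. -/
structure QRepHom {K : Type u} [Field K] {V : Type v} [Quiver.{v+1} V]
    (X Y : QRep.{w} K V) where
  app : ∀ i, X.space i →ₗ[K] Y.space i
  comm : ∀ {i j : V} (a : i ⟶ j), (Y.map a).comp (app i) = (app j).comp (X.map a)

/-- The projective representation `KQe_i`: at vertex `j` it has basis the paths `i ⟶ j`,
and arrows act by postcomposition. -/
noncomputable def projRep (K : Type u) [Field K] (V : Type v) [Quiver.{v+1} V] (i : V) :
    QRep.{max u (v+1)} K V where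
  space j := Path i j →₀ K
  map a := Finsupp.lmapDomain K K (fun p => p.cons a)

/-- Right multiplication by an arrow `a : i ⟶ j`, as a morphism `KQe_j → KQe_i`. -/
noncomputable def rmulArrow {K : Type u} [Field K] {V : Type v} [Quiver.{v+1} V]
    {i j : V} (a : i ⟶ j) : QRepHom (projRep K V j) (projRep K V i) where
  app k := Finsupp.lmapDomain K K (fun p : Path j k => (a.toPath).comp p)
  comm := by
    intro k l b
    refine Finsupp.lhom_ext fun p c => ?_
    show Finsupp.mapDomain _ (Finsupp.mapDomain _ (Finsupp.single p c)) = Finsupp.mapDomain _ (Finsupp.mapDomain _ (Finsupp.single p c))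
    simp [Finsupp.mapDomain_single, Quiver.Path.comp_cons]

/-- The cokernel representation of a morphism of representations. -/
noncomputable def cokerRep {K : Type u} [Field K] {V : Type v} [Quiver.{v+1} V]
    {F X : QRep.{w} K V} (f : QRepHom F X) : QRep.{w} K V where
  space i := X.space i ⧸ LinearMap.range (f.app i)
  map {i j} a := Submodule.mapQ _ _ (X.map a) (by
    rintro x ⟨y, rfl⟩
    exact ⟨F.map a y, by
      rw [← LinearMap.comp_apply, ← f.comm, LinearMap.comp_apply]⟩)

/-- The projection onto the cokernel representation. -/
noncomputable def cokerProj {K : Type u} [Field K] {V : Type v} [Quiver.{v+1} V]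
    {F X : QRep.{w} K V} (f : QRepHom F X) : QRepHom X (cokerRep f) where
  app i := (LinearMap.range (f.app i)).mkQ
  comm {i j} a := Submodule.mapQ_mkQ _ _ (h := by
    rintro x ⟨y, rfl⟩
    exact ⟨F.map a y, by
      rw [← LinearMap.comp_apply, ← f.comm, LinearMap.comp_apply]⟩)

/-- The representation `C(a) = KQe_{t(a)}/KQa` for an arrow `a : i ⟶ j`. -/
noncomputable def Ca {K : Type u} [Field K] {V : Type v} [Quiver.{v+1} V]
    {i j : V} (a : i ⟶ j) : QRep.{max u (v+1)} K V :=
  cokerRep (rmulArrow (K := K) a)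

section Aux

open Quiver Finsupp

variable {K : Type u} [Field K] {V : Type v} [Quiver.{v+1} V]

/-- Action of a path on a representation. -/
noncomputable def QRep.mapPathL (X : QRep.{w} K V) {i : V} :
    ∀ {k : V}, Path i k → (X.space i →ₗ[K] X.space k)
  | _, Path.nil => LinearMap.id
  | _, Path.cons p b => (X.map b).comp (X.mapPathL p)

lemma QRepHom.app_mapPathL {X Y : QRep.{w} K V} (θ : QRepHom X Y) {i k : V}
    (q : Path i k) (x : X.space i) :
    θ.app k (X.mapPathL q x) = Y.mapPathL q (θ.app i x) := by
  induction q with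
  | nil => rfl
  | cons p b ih =>
    dsimp only [QRep.mapPathL, LinearMap.comp_apply]
    rw [← ih]
    exact (LinearMap.congr_fun (θ.comm b) _).symm

lemma mapPathL_proj (i : V) {k : V} (q : Path i k) :
    (projRep K V i).mapPathL q (Finsupp.single Path.nil (1 : K)) = Finsupp.single q 1 := by
  induction q with
  | nil => rfl
  | cons p b ih =>
    dsimp only [QRep.mapPathL, LinearMap.comp_apply]
    show (projRep K V i).map b ((projRep K V i).mapPathL p (Finsupp.single Path.nil (1 : K))) = _
    rw [ih]
    show Finsupp.mapDomain _ (Finsupp.single p 1) = _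
    rw [Finsupp.mapDomain_single]

lemma mapPathL_coker {F X : QRep.{w} K V} (f : QRepHom F X) {i k : V}
    (q : Path i k) (x : X.space i) :
    (cokerRep f).mapPathL q ((cokerProj f).app i x)
      = (cokerProj f).app k (X.mapPathL q x) := by
  induction q with
  | nil => rfl
  | cons p b ih =>
    dsimp only [QRep.mapPathL, LinearMap.comp_apply]
    rw [ih]
    exact LinearMap.congr_fun ((cokerProj f).comm b) _

lemma cons_injective' {i j : V} (a : i ⟶ j) :
    Function.Injective (fun p : Path i i => p.cons a) :=
  fun _ _ h => eq_of_heq (Quiver.Path.heq_of_cons_eq_cons h)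

lemma mem_range_rmul {i j : V} (a : i ⟶ j) (k : V) (y : Path i k →₀ K) :
    y ∈ LinearMap.range ((rmulArrow (K := K) a).app k) ↔
      ∀ q : Path i k, q ∉ Set.range (fun p : Path j k => a.toPath.comp p) → y q = 0 := by
  constructor
  · rintro ⟨z, rfl⟩ q hq
    show Finsupp.mapDomain _ z q = 0
    exact Finsupp.mapDomain_notin_range _ _ hq
  · intro h
    have hinj : Function.Injective (fun p : Path j k => a.toPath.comp p) :=
      Quiver.Path.comp_injective_right a.toPath
    refine ⟨Finsupp.comapDomain (fun p : Path j k => a.toPath.comp p) y hinj.injOn, ?_⟩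
    show Finsupp.mapDomain (fun p : Path j k => a.toPath.comp p) _ = y
    refine Finsupp.mapDomain_comapDomain _ hinj y ?_
    intro q hq
    by_contra hq'
    exact Finsupp.mem_support_iff.mp hq (h q hq')

lemma cons_notin_range {i j : V} (a : i ⟶ j) {q : Path i i} (hnil : q ≠ Path.nil)
    (hq : q ∉ Set.range (fun p : Path j i => a.toPath.comp p)) :
    q.cons a ∉ Set.range (fun p : Path j j => a.toPath.comp p) := by
  rintro ⟨p, hp⟩
  cases p with
  | nil =>
    have hp' : Path.nil.cons a = q.cons a := hp
    exact hnil (eq_of_heq (Quiver.Path.heq_of_cons_eq_cons hp')).symm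
  | cons p' b =>
    have hp' : (a.toPath.comp p').cons b = q.cons a := hp
    have hv := Quiver.Path.obj_eq_of_cons_eq_cons hp'
    subst hv
    exact hq ⟨p', eq_of_heq (Quiver.Path.heq_of_cons_eq_cons hp')⟩

lemma ker_lemma {i j : V} (a : i ⟶ j) (x : Path i i →₀ K)
    (hx : Finsupp.mapDomain (fun p : Path i i => p.cons a) x
      ∈ LinearMap.range ((rmulArrow (K := K) a).app j)) :
    x - x Path.nil • Finsupp.single Path.nil 1
      ∈ LinearMap.range ((rmulArrow (K := K) a).app i) := by
  erw [mem_range_rmul] at hx ⊢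
  intro q hq
  by_cases h : q = Path.nil
  · subst h
    erw [Finsupp.sub_apply, Finsupp.smul_apply, Finsupp.single_eq_same, smul_eq_mul,
      mul_one, sub_self]
  · have h1 : x q = 0 := by
      have := hx (q.cons a) (cons_notin_range a h hq)
      rwa [Finsupp.mapDomain_apply (cons_injective' a)] at this
    erw [Finsupp.sub_apply, Finsupp.smul_apply, Finsupp.single_eq_of_ne h, h1,
      smul_zero, sub_zero]

end Aux

/-- For an arrow `a` of a finite quiver, `End(C(a)) = K`: every endomorphism of
`C(a)` is multiplication by a scalar. -/
theorem end_Ca_eq_K {K : Type u} [Field K] {V : Type v} [Quiver.{v+1} V]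
    [Fintype V] [∀ i j : V, Fintype (i ⟶ j)] {i j : V} (a : i ⟶ j) :
    ∀ θ : QRepHom (Ca (K := K) a) (Ca (K := K) a),
      ∃ c : K, ∀ (k : V) (x : (Ca (K := K) a).space k), θ.app k x = c • x := by
  intro θ
  classical
  have hπ0 : ∀ (k : V) (z : Path i k →₀ K),
      ((cokerProj (rmulArrow (K := K) a)).app k z = 0 ↔
        z ∈ LinearMap.range ((rmulArrow (K := K) a).app k)) :=
    fun k z => Submodule.Quotient.mk_eq_zero _
  have hcomm : ∀ {k l : V} (b : k ⟶ l) (z : Path i k →₀ K),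
      (Ca (K := K) a).map b ((cokerProj (rmulArrow (K := K) a)).app k z)
        = (cokerProj (rmulArrow (K := K) a)).app l
            (Finsupp.mapDomain (fun p : Path i k => p.cons b) z) :=
    fun b z => LinearMap.congr_fun ((cokerProj (rmulArrow (K := K) a)).comm b) z
  set e : (Ca (K := K) a).space i :=
    (cokerProj (rmulArrow (K := K) a)).app i (Finsupp.single Path.nil 1) with he
  obtain ⟨y, hy⟩ : ∃ z : Path i i →₀ K,
      (cokerProj (rmulArrow (K := K) a)).app i z = θ.app i e :=
    Submodule.mkQ_surjective _ _
  have hmape : (Ca (K := K) a).map a e = 0 := by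
    erw [he, hcomm a, hπ0]
    refine ⟨Finsupp.single Path.nil 1, ?_⟩
    show Finsupp.mapDomain (fun p : Path j j => a.toPath.comp p)
      (Finsupp.single Path.nil 1) = _
    rw [Finsupp.mapDomain_single, Finsupp.mapDomain_single]
    rfl
  have h0 : (Ca (K := K) a).map a (θ.app i e) = 0 := by
    have h := LinearMap.congr_fun (θ.comm a) e
    simp only [LinearMap.comp_apply] at h
    rw [h, hmape, map_zero]
  have h0' : Finsupp.mapDomain (fun p : Path i i => p.cons a) y
      ∈ LinearMap.range ((rmulArrow (K := K) a).app j) := by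
    rw [← hπ0, ← hcomm a, hy]
    exact h0
  have hker := ker_lemma a y h0'
  refine ⟨y Path.nil, ?_⟩
  have hc : θ.app i e = y Path.nil • e := by
    have hc' : (cokerProj (rmulArrow (K := K) a)).app i y
        = y Path.nil • (cokerProj (rmulArrow (K := K) a)).app i (Finsupp.single Path.nil 1) := by
      erw [← map_smul, ← sub_eq_zero, ← map_sub, hπ0]
      exact hker
    rw [← hy, he]
    exact hc'
  intro k x
  obtain ⟨z, rfl⟩ : ∃ z : Path i k →₀ K,
      (cokerProj (rmulArrow (K := K) a)).app k z = x :=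
    Submodule.mkQ_surjective _ _
  induction z using Finsupp.induction_linear with
  | zero => erw [map_zero ((cokerProj (rmulArrow (K := K) a)).app k), map_zero (θ.app k)]; exact (smul_zero _).symm
  | add f g hf hg => erw [map_add ((cokerProj (rmulArrow (K := K) a)).app k)]; erw [map_add, hf, hg, smul_add]
  | single q r =>
    have hCaPath : ∀ (w : Path i i →₀ K),
        (Ca (K := K) a).mapPathL q ((cokerProj (rmulArrow (K := K) a)).app i w)
          = (cokerProj (rmulArrow (K := K) a)).app k ((projRep K V i).mapPathL q w) :=
      fun w => mapPathL_coker (rmulArrow (K := K) a) q w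
    have key : (cokerProj (rmulArrow (K := K) a)).app k (Finsupp.single q r)
        = r • (Ca (K := K) a).mapPathL q e := by
      rw [he, hCaPath, mapPathL_proj]
      have hr : r • Finsupp.single q (1 : K) = Finsupp.single q r := by
        rw [Finsupp.smul_single, smul_eq_mul, mul_one]
      erw [← hr, map_smul]; rfl
    rw [key, map_smul, θ.app_mapPathL, hc, map_smul, smul_comm]
end

section
/- Let Q be a finite quiver, I and S disjoint subsets of Q_1, and suppose Q has no oriented I-cycles and no oriented S-cycles. Then the subcategory Rep^{I,S}(Q) of representations where arrows in I are injective and arrows in S are surjective is covariantly finite in Rep Q: for every finite-dimensional representation X there is a morphism f : X → Y with Y ∈ Rep^{I,S}(Q) such that every morphism from X to an object of Rep^{I,S}(Q) factors through f. -/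
open Quiver

universe w v u

/-- `Hom(A,B) = 0` in the category of representations. -/
def HomVanishes {K : Type u} [Field K] {V : Type v} [Quiver.{v+1} V]
    (A B : QRep.{w} K V) : Prop :=
  ∀ θ : QRepHom A B, ∀ (k : V) (x : A.space k), θ.app k x = 0

/-- `u, v` form a short exact sequence `0 → X → E → Z → 0` of representations. -/
def IsSES {K : Type u} [Field K] {V : Type v} [Quiver.{v+1} V]
    {X E Z : QRep.{w} K V} (u : QRepHom X E) (v : QRepHom E Z) : Prop :=
  ∀ k : V, Function.Injective (u.app k) ∧ Function.Surjective (v.app k) ∧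
    LinearMap.range (u.app k) = LinearMap.ker (v.app k)

/-- `Ext¹(Z,X) = 0`: every short exact sequence `0 → X → E → Z → 0` of
representations splits. -/
def ExtVanishes {K : Type u} [Field K] {V : Type v} [Quiver.{v+1} V]
    (Z X : QRep.{w} K V) : Prop :=
  ∀ (E : QRep.{w} K V) (u : QRepHom X E) (v : QRepHom E Z), IsSES u v →
    ∃ s : QRepHom Z E, ∀ k : V, (v.app k).comp (s.app k) = LinearMap.id

/-- `X` belongs to `Rep^{I,S} Q`: arrows in `I` act injectively and arrows in `S`
act surjectively. -/
def MemRepIS {K : Type u} [Field K] {V : Type v} [Quiver.{v+1} V]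
    (I S : ∀ i j : V, Set (i ⟶ j)) (X : QRep.{w} K V) : Prop :=
  (∀ {i j : V} (a : i ⟶ j), a ∈ I i j → Function.Injective (X.map a)) ∧
  (∀ {i j : V} (a : i ⟶ j), a ∈ S i j → Function.Surjective (X.map a))

/-- An oriented `A`-cycle in a quiver: a cyclic word `w_0 w_1 ⋯ w_{n-1}`, `n ≥ 1`
(indices mod `n`), each letter either an arrow of the quiver or a formal inverse of an
arrow in `A`, consecutive letters not inverse to each other, and `t(w_k) = h(w_{k+1})`.
Here `vert k = h(w_k)`, so the letter `w_k` goes from `vert (k+1)` to `vert k`. -/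
structure OrientedCycle {V : Type v} [Quiver.{v+1} V]
    (A : ∀ i j : V, Set (i ⟶ j)) where
  n : ℕ
  npos : 0 < n
  vert : ZMod n → V
  letter : ∀ k : ZMod n,
    (vert (k + 1) ⟶ vert k) ⊕ {a : vert k ⟶ vert (k + 1) // a ∈ A _ _}
  reduced₁ : ∀ (k : ZMod n) (x : vert (k + 1) ⟶ vert k)
    (y : vert (k + 1) ⟶ vert (k + 1 + 1)) (hy : y ∈ A _ _),
    letter k = Sum.inl x → letter (k + 1) = Sum.inr ⟨y, hy⟩ →
    (⟨vert (k + 1), vert k, x⟩ : Σ i j : V, i ⟶ j) ≠ ⟨vert (k + 1), vert (k + 1 + 1), y⟩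
  reduced₂ : ∀ (k : ZMod n) (x : vert k ⟶ vert (k + 1)) (hx : x ∈ A _ _)
    (y : vert (k + 1 + 1) ⟶ vert (k + 1)),
    letter k = Sum.inr ⟨x, hx⟩ → letter (k + 1) = Sum.inl y →
    (⟨vert k, vert (k + 1), x⟩ : Σ i j : V, i ⟶ j) ≠ ⟨vert (k + 1 + 1), vert (k + 1), y⟩

namespace CovFin

attribute [local instance] Classical.propDecidable

variable {V : Type v} [Quiver.{v+1} V]

abbrev QArrow (V : Type v) [Quiver.{v+1} V] := Σ i j : V, i ⟶ j

def homCast {i i' j j' : V} (h1 : i = i') (h2 : j = j') (f : i ⟶ j) : i' ⟶ j' :=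
  h1 ▸ h2 ▸ f

lemma homCast_sigma {i i' j j' : V} (h1 : i = i') (h2 : j = j') (f : i ⟶ j) :
    (⟨i', j', homCast h1 h2 f⟩ : QArrow V) = ⟨i, j, f⟩ := by
  subst h1; subst h2; rfl

lemma homCast_mem {A : ∀ i j : V, Set (i ⟶ j)} {i i' j j' : V}
    (h1 : i = i') (h2 : j = j') {f : i ⟶ j} (hf : f ∈ A i j) :
    homCast h1 h2 f ∈ A i' j' := by
  subst h1; subst h2; exact hf

variable (S : ∀ i j : V, Set (i ⟶ j))

/-- A step: forward along any arrow, or backward along an arrow of `S`. -/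
abbrev QStep := QArrow V ⊕ {A : QArrow V // A.2.2 ∈ S A.1 A.2.1}

variable {S}

def QStep.src : QStep S → V
  | .inl A => A.1
  | .inr A => A.1.2.1

def QStep.tgt : QStep S → V
  | .inl A => A.2.1
  | .inr A => A.1.1

def QStep.Cancel (x y : QStep S) : Prop :=
  (∃ A h, x = .inl A ∧ y = .inr ⟨A, h⟩) ∨ (∃ A h, x = .inr ⟨A, h⟩ ∧ y = .inl A)

instance [Fintype V] [∀ i j : V, Fintype (i ⟶ j)] : Finite (QStep S) := by
  unfold QStep; infer_instance

/-- Convert a step into a "letter" of an oriented cycle. -/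
def stepToLetter : ∀ (x : QStep S) (i j : V), x.src = i → x.tgt = j →
    ((i ⟶ j) ⊕ {a : j ⟶ i // a ∈ S j i})
  | .inl A, _, _, h1, h2 => .inl (homCast h1 h2 A.2.2)
  | .inr A, _, _, h1, h2 => .inr ⟨homCast h2 h1 A.1.2.2, homCast_mem _ _ A.2⟩

lemma stepToLetter_eq_inl {x : QStep S} {i j : V} {h1 : x.src = i} {h2 : x.tgt = j}
    {f : i ⟶ j} (h : stepToLetter x i j h1 h2 = .inl f) :
    x = Sum.inl ⟨i, j, f⟩ := by
  cases x with
  | inl A =>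
    obtain ⟨a, b, g⟩ := A
    cases h1; cases h2
    simp only [stepToLetter, homCast] at h ⊢
    cases h; rfl
  | inr A => simp [stepToLetter] at h

lemma stepToLetter_eq_inr {x : QStep S} {i j : V} {h1 : x.src = i} {h2 : x.tgt = j}
    {f : j ⟶ i} {hf : f ∈ S j i} (h : stepToLetter x i j h1 h2 = .inr ⟨f, hf⟩) :
    x = Sum.inr ⟨⟨j, i, f⟩, hf⟩ := by
  cases x with
  | inl A => simp [stepToLetter] at h
  | inr A =>
    obtain ⟨⟨a, b, g⟩, hg⟩ := A
    cases h1; cases h2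
    simp only [stepToLetter, homCast] at h ⊢
    cases h; rfl

/-- From a long enough composable reduced list of steps one gets an oriented `S`-cycle. -/
lemma cycle_of_long [Fintype V] [∀ i j : V, Fintype (i ⟶ j)]
    (l : List (QStep S))
    (hc : l.Chain' (fun x y => x.src = y.tgt))
    (hr : l.Chain' (fun x y => ¬ QStep.Cancel x y))
    (hlen : Nat.card (QStep S) < l.length) :
    Nonempty (OrientedCycle S) := by
  classical
  letI : Fintype (QStep S) := Fintype.ofFinite _
  set L := l.length with hL
  have hcard : Fintype.card (QStep S) < Fintype.card (Fin L) := by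
    rw [Fintype.card_fin]
    simpa [Nat.card_eq_fintype_card] using hlen
  obtain ⟨a, b, hab, hfab⟩ := Fintype.exists_ne_map_eq_of_card_lt
    (fun m : Fin L => l.get m) hcard
  wlog hlt : (a : ℕ) < (b : ℕ) generalizing a b
  · refine this b a hab.symm hfab.symm ?_
    rcases Fin.lt_or_lt_of_ne hab with h | h
    · omega
    · exact h
  have hcC : ∀ (i : ℕ) (h : i < L - 1),
      (l.get ⟨i, by omega⟩).src = (l.get ⟨i + 1, by omega⟩).tgt :=
    fun i h => List.isChain_iff_getElem.mp hc i (by omega)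
  have hrC : ∀ (i : ℕ) (h : i < L - 1),
      ¬ QStep.Cancel (l.get ⟨i, by omega⟩) (l.get ⟨i + 1, by omega⟩) :=
    fun i h => List.isChain_iff_getElem.mp hr i (by omega)
  set n : ℕ := (b : ℕ) - (a : ℕ) with hn'
  have hn : 0 < n := by omega
  haveI : NeZero n := ⟨hn.ne'⟩
  have hbL : (b : ℕ) < L := b.2
  set u : ℕ → QStep S := fun m => l.getD ((a : ℕ) + m % n) (l.get a) with hu
  have hidx : ∀ m : ℕ, (a : ℕ) + m % n < L := fun m => by
    have := Nat.mod_lt m hn; omega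
  have hget : ∀ m : ℕ, u m = l.get ⟨(a : ℕ) + m % n, hidx m⟩ := fun m => by
    rw [hu]; exact List.getD_eq_get l _ ⟨_, hidx m⟩
  have humod : ∀ m : ℕ, u (m % n) = u m := fun m => by
    rw [hget, hget]; congr 1; exact Fin.ext (by simp [Nat.mod_mod_of_dvd _ dvd_rfl])
  have key : ∀ m : ℕ, (u m).src = (u (m + 1)).tgt ∧ ¬ QStep.Cancel (u m) (u (m + 1)) := by
    intro m
    set r := m % n with hr'
    have hr : r < n := Nat.mod_lt _ hn
    have hm1 : (m + 1) % n = (r + 1) % n := by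
      conv_lhs => rw [Nat.add_mod]
      conv_rhs => rw [Nat.add_mod, Nat.mod_mod_of_dvd _ dvd_rfl]
    rcases Nat.lt_or_ge (r + 1) n with hlt2 | hge
    · have hm1' : (m + 1) % n = r + 1 := by rw [hm1, Nat.mod_eq_of_lt hlt2]
      have hiL : (a : ℕ) + r < L - 1 := by omega
      have e1 : u m = l.get ⟨(a : ℕ) + r, by omega⟩ := by
        rw [hget]
      have e2 : u (m + 1) = l.get ⟨(a : ℕ) + r + 1, by omega⟩ := by
        rw [hget]; congr 1; exact Fin.ext (by simp [hm1']; omega)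
      rw [e1, e2]
      exact ⟨hcC _ hiL, hrC _ hiL⟩
    · have hrn : r + 1 = n := by omega
      have hm1' : (m + 1) % n = 0 := by rw [hm1, hrn, Nat.mod_self]
      have hb1 : (b : ℕ) - 1 < L - 1 := by omega
      have e1 : u m = l.get ⟨(b : ℕ) - 1, by omega⟩ := by
        rw [hget]; congr 1; exact Fin.ext (by simp; omega)
      have e2 : u (m + 1) = l.get ⟨(b : ℕ) - 1 + 1, by omega⟩ := by
        rw [hget]
        have h1 : (⟨(a : ℕ) + (m + 1) % n, hidx _⟩ : Fin L) = a := Fin.ext (by simp [hm1'])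
        rw [h1, hfab]
        congr 1; exact Fin.ext (by simp; omega)
      rw [e1, e2]
      exact ⟨hcC _ hb1, hrC _ hb1⟩
  -- descend to ZMod n
  have uval : ∀ t : ZMod n, u ((t + 1).val) = u (t.val + 1) := by
    intro t
    have : ((t.val + 1 : ℕ) : ZMod n) = t + 1 := by
      push_cast [ZMod.natCast_val, ZMod.cast_id]
      rfl
    rw [← this, ZMod.val_natCast, humod]
  set vert : ZMod n → V := fun t => (u t.val).tgt with hvertdef
  have hvert : ∀ t : ZMod n, vert (t + 1) = (u t.val).src := by
    intro t
    show (u ((t+1).val)).tgt = (u t.val).src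
    rw [uval]
    exact ((key t.val).1).symm
  refine ⟨⟨n, hn, vert, fun t => stepToLetter (u t.val) _ _ (hvert t).symm rfl, ?_, ?_⟩⟩
  · intro t x y hy hx hy'
    have e1 : u t.val = Sum.inl ⟨vert (t + 1), vert t, x⟩ := stepToLetter_eq_inl hx
    have e2 : u (t.val + 1) = Sum.inr ⟨⟨vert (t + 1), vert (t + 1 + 1), y⟩, hy⟩ := by
      rw [← uval]; exact stepToLetter_eq_inr hy'
    intro hEq
    exact (key t.val).2 (Or.inl ⟨⟨vert (t + 1), vert (t + 1 + 1), y⟩, hy, by rw [e1, hEq], e2⟩)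
  · intro t x hx y hx' hy'
    have e1 : u t.val = Sum.inr ⟨⟨vert t, vert (t + 1), x⟩, hx⟩ := stepToLetter_eq_inr hx'
    have e2 : u (t.val + 1) = Sum.inl ⟨vert (t + 1 + 1), vert (t + 1), y⟩ := by
      rw [← uval]; exact stepToLetter_eq_inl hy'
    intro hEq
    refine (key t.val).2 (Or.inr ⟨⟨vert t, vert (t + 1), x⟩, hx, e1, ?_⟩)
    rw [e2]; exact congrArg Sum.inl hEq.symm


variable (S) in
/-- Walks from `u` (origin) to `v` (location): steps are appended at the outside,
so the outermost constructor is the most recent step. Forward steps go along any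
arrow, backward steps along arrows of `S`. -/
inductive W : V → V → Type (v+1)
  | nil (v : V) : W v v
  | fwd {u i j : V} (p : W u i) (b : i ⟶ j) : W u j
  | bwd {u i j : V} (p : W u j) (s : i ⟶ j) (hs : s ∈ S i j) : W u i

namespace W

def NotNil : ∀ {u v : V}, W S u v → Prop
  | _, _, .nil _ => False
  | _, _, _ => True

def NotBwdEnd : ∀ {u i : V}, W S u i → ∀ {j : V}, (i ⟶ j) → Prop
  | _, _, .bwd _ s _, j, b => (⟨_, _, s⟩ : QArrow V) ≠ ⟨_, j, b⟩
  | _, _, _, _, _ => True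

def NotFwdEnd : ∀ {u j : V}, W S u j → ∀ {i : V}, (i ⟶ j) → Prop
  | _, _, .fwd _ c, i, s => (⟨_, _, c⟩ : QArrow V) ≠ ⟨i, _, s⟩
  | _, _, _, _, _ => True

/-- Admissible (reduced, and not starting with a forward step) walks. -/
def Adm {u : V} : ∀ {v : V}, W S u v → Prop
  | _, .nil _ => True
  | _, .fwd p b => Adm p ∧ NotNil p ∧ NotBwdEnd p b
  | _, .bwd p s _ => Adm p ∧ NotFwdEnd p s

def toList {u : V} : ∀ {v : V}, W S u v → List (QStep S)
  | _, .nil _ => []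
  | _, .fwd p b => Sum.inl ⟨_, _, b⟩ :: toList p
  | _, .bwd p s hs => Sum.inr ⟨⟨_, _, s⟩, hs⟩ :: toList p

def len {u v : V} (p : W S u v) : ℕ := p.toList.length

lemma head_tgt : ∀ {u v : V} (p : W S u v) (x : QStep S) (xs : List (QStep S)),
    toList p = x :: xs → x.tgt = v
  | _, _, .nil _, x, xs, h => by simp [toList] at h
  | _, _, .fwd p b, x, xs, h => by
      rw [toList] at h; cases h; rfl
  | _, _, .bwd p s hs, x, xs, h => by
      rw [toList] at h; cases h; rfl

lemma chain_comp {u : V} : ∀ {v : V} (p : W S u v),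
    p.toList.Chain' (fun x y => x.src = y.tgt)
  | _, .nil _ => by simp [toList]; exact List.isChain_nil
  | _, .fwd p b => by
      rw [toList]; refine List.isChain_cons.mpr ?_
      refine ⟨?_, chain_comp p⟩
      intro y hy
      rcases hl : toList p with _ | ⟨x, xs⟩
      · rw [hl] at hy; simp at hy
      · rw [hl] at hy; simp at hy
        subst hy
        exact (head_tgt p _ _ hl).symm
  | _, .bwd p s hs => by
      rw [toList]; refine List.isChain_cons.mpr ?_
      refine ⟨?_, chain_comp p⟩
      intro y hy
      rcases hl : toList p with _ | ⟨x, xs⟩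
      · rw [hl] at hy; simp at hy
      · rw [hl] at hy; simp at hy
        subst hy
        exact (head_tgt p _ _ hl).symm

lemma chain_red {u : V} : ∀ {v : V} (p : W S u v), Adm p →
    p.toList.Chain' (fun x y => ¬ QStep.Cancel x y)
  | _, .nil _, _ => by simp [toList]; exact List.isChain_nil
  | _, .fwd p b, hp => by
      simp only [Adm] at hp
      obtain ⟨h1, h2, h3⟩ := hp
      rw [toList]; refine List.isChain_cons.mpr ?_
      refine ⟨?_, chain_red p h1⟩
      intro y hy hcan
      rcases hcan with ⟨A, hA, hx, hy'⟩ | ⟨A, hA, hx, hy'⟩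
      · -- inl ⟨_,_,b⟩ = inl A and y = inr ⟨A, hA⟩
        cases hx
        cases p with
        | nil => simp [toList] at hy
        | fwd q c => simp [toList] at hy; rw [hy'] at hy; simp at hy
        | bwd q s hs =>
            simp [toList] at hy
            rw [hy'] at hy
            injection hy with hy
            simp only [NotBwdEnd] at h3
            exact h3 (congrArg Subtype.val hy)
      · exact (Sum.inl_ne_inr hx).elim
  | _, .bwd p s hs, hp => by
      simp only [Adm] at hp
      obtain ⟨h1, h3⟩ := hp
      rw [toList]; refine List.isChain_cons.mpr ?_
      refine ⟨?_, chain_red p h1⟩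
      intro y hy hcan
      rcases hcan with ⟨A, hA, hx, hy'⟩ | ⟨A, hA, hx, hy'⟩
      · exact (Sum.inr_ne_inl hx).elim
      · cases hx
        cases p with
        | nil => simp [toList] at hy
        | bwd q c hc => simp [toList] at hy; rw [hy'] at hy; simp at hy
        | fwd q c =>
            simp [toList] at hy
            rw [hy'] at hy
            injection hy with hy
            simp only [NotFwdEnd] at h3
            exact h3 hy

lemma len_le [Fintype V] [∀ i j : V, Fintype (i ⟶ j)]
    (hS : IsEmpty (OrientedCycle S)) {u v : V} (p : W S u v) (hp : Adm p) :
    p.len ≤ Nat.card (QStep S) := by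
  by_contra h
  rw [len] at h
  exact hS.false (cycle_of_long p.toList (chain_comp p) (chain_red p hp)
    (by omega)).some

lemma toList_inj {u v : V} (p : W S u v) :
    ∀ {u' : V} (q : W S u' v), toList p = toList q → u = u' ∧ HEq p q := by
  induction p with
  | nil =>
      intro u' q h
      cases q with
      | nil => exact ⟨rfl, HEq.rfl⟩
      | fwd q c => simp [toList] at h
      | bwd q s hs => simp [toList] at h
  | fwd p b ih =>
      intro u' q h
      cases q with
      | nil => simp [toList] at h
      | bwd q s hs => simp [toList] at h
      | fwd q c =>
          rw [toList, toList, List.cons_eq_cons] at h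
          obtain ⟨hA, hl⟩ := h
          injection hA with hA
          obtain ⟨hi, hrest⟩ := Sigma.mk.inj_iff.mp hA
          subst hi
          obtain ⟨-, hbc⟩ := Sigma.mk.inj_iff.mp (eq_of_heq hrest)
          have hbc' := eq_of_heq hbc; subst hbc'
          obtain ⟨hu, hpq⟩ := ih q hl
          subst hu
          have hpq' := eq_of_heq hpq; subst hpq'
          exact ⟨rfl, HEq.rfl⟩
  | bwd p s hs ih =>
      intro u' q h
      cases q with
      | nil => simp [toList] at h
      | fwd q c => simp [toList] at h
      | bwd q c hc =>
          rw [toList, toList, List.cons_eq_cons] at h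
          obtain ⟨hA, hl⟩ := h
          injection hA with hA
          have hA' := congrArg Subtype.val hA
          simp only at hA'
          obtain ⟨-, hrest⟩ := Sigma.mk.inj_iff.mp hA'
          obtain ⟨hj, hsc⟩ := Sigma.mk.inj_iff.mp (eq_of_heq hrest)
          subst hj
          have hsc' := eq_of_heq hsc; subst hsc'
          obtain ⟨hu, hpq⟩ := ih q hl
          subst hu
          have hpq' := eq_of_heq hpq; subst hpq'
          exact ⟨rfl, HEq.rfl⟩

lemma finite_adm [Fintype V] [∀ i j : V, Fintype (i ⟶ j)]
    (hS : IsEmpty (OrientedCycle S)) (v : V) :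
    Finite (Σ u : V, {p : W S u v // Adm p}) := by
  haveI : Finite {l : List (QStep S) | l.length ≤ Nat.card (QStep S)} :=
    (List.finite_length_le (QStep S) (Nat.card (QStep S))).to_subtype
  refine Finite.of_injective
    (fun x : Σ u : V, {p : W S u v // Adm p} =>
      (⟨x.2.1.toList, len_le hS x.2.1 x.2.2⟩ :
        {l : List (QStep S) | l.length ≤ Nat.card (QStep S)})) ?_
  rintro ⟨u, p, hp⟩ ⟨u', q, hq⟩ h
  simp only [Subtype.mk.injEq] at h
  obtain ⟨hu, hpq⟩ := toList_inj p q (congrArg Subtype.val h)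
  subst hu
  have hpq' := eq_of_heq hpq; subst hpq'
  rfl


/-- Cast a walk along an equality of its endpoint. -/
def castLoc {u i i' : V} (h : i = i') (p : W S u i) : W S u i' := h ▸ p

lemma castLoc_adm {u i i' : V} (h : i = i') (p : W S u i) (hp : Adm p) :
    Adm (castLoc h p) := by subst h; exact hp

lemma castLoc_toList {u i i' : V} (h : i = i') (p : W S u i) :
    (castLoc h p).toList = p.toList := by subst h; rfl

lemma adm_nil (v : V) : Adm (.nil v : W S v v) := by simp only [Adm]

lemma adm_fwd {u i j : V} {p : W S u i} (b : i ⟶ j) (h1 : Adm p)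
    (h2 : NotNil p) (h3 : NotBwdEnd p b) : Adm (p.fwd b) := by
  simp only [Adm]; exact ⟨h1, h2, h3⟩

lemma adm_bwd {u i j : V} {q : W S u j} (s : i ⟶ j) (hs : s ∈ S i j)
    (h1 : Adm q) (h2 : NotFwdEnd q s) : Adm (q.bwd s hs) := by
  simp only [Adm]; exact ⟨h1, h2⟩

lemma adm_of_fwd {u i j : V} {p : W S u i} {b : i ⟶ j} (h : Adm (p.fwd b)) :
    Adm p ∧ NotNil p ∧ NotBwdEnd p b := by simp only [Adm] at h; exact h

lemma adm_of_bwd {u i j : V} {q : W S u j} {s : i ⟶ j} {hs : s ∈ S i j}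
    (h : Adm (q.bwd s hs)) : Adm q ∧ NotFwdEnd q s := by
  simp only [Adm] at h; exact h

end W




section Quot

variable {K : Type u} [Field K]

lemma exists_I_quotient (I : ∀ i j : V, Set (i ⟶ j)) (X : QRep.{w} K V)
    [hfd : ∀ i, FiniteDimensional K (X.space i)] :
    ∃ (X' : QRep.{w} K V) (_ : ∀ i, FiniteDimensional K (X'.space i))
      (π : QRepHom X X'),
      (∀ {i j : V} (a : i ⟶ j), a ∈ I i j → Function.Injective (X'.map a)) ∧
      ∀ (Z : QRep.{w} K V),
        (∀ {i j : V} (a : i ⟶ j), a ∈ I i j → Function.Injective (Z.map a)) →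
        ∀ g : QRepHom X Z, ∃ g' : QRepHom X' Z,
          ∀ v : V, (g'.app v).comp (π.app v) = g.app v := by
  classical
  set Fam : Set (∀ v : V, Submodule K (X.space v)) :=
    {U | (∀ {i j : V} (b : i ⟶ j) (x : X.space i), x ∈ U i → X.map b x ∈ U j) ∧
         (∀ {i j : V} (a : i ⟶ j), a ∈ I i j → ∀ x : X.space i,
            X.map a x ∈ U j → x ∈ U i)} with hFam
  have hFamMem : ∀ (U : ∀ v : V, Submodule K (X.space v)), U ∈ Fam ↔
      ((∀ {i j : V} (b : i ⟶ j) (x : X.space i), x ∈ U i → X.map b x ∈ U j) ∧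
       (∀ {i j : V} (a : i ⟶ j), a ∈ I i j → ∀ x : X.space i,
          X.map a x ∈ U j → x ∈ U i)) := by
    intro U; rw [hFam]; exact Iff.rfl
  set U0 : ∀ v : V, Submodule K (X.space v) := fun v => ⨅ (W : Fam), W.1 v with hU0
  have hmem : ∀ (v : V) (x : X.space v), x ∈ U0 v ↔ ∀ W : Fam, x ∈ W.1 v := by
    intro v x
    simp [hU0, Submodule.mem_iInf]
  have hsat1 : ∀ {i j : V} (b : i ⟶ j) (x : X.space i),
      x ∈ U0 i → X.map b x ∈ U0 j := by
    intro i j b x hx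
    rw [hmem] at hx ⊢
    exact fun W => ((hFamMem W.1).mp W.2).1 b x (hx W)
  have hsat2 : ∀ {i j : V} (a : i ⟶ j), a ∈ I i j → ∀ x : X.space i,
      X.map a x ∈ U0 j → x ∈ U0 i := by
    intro i j a ha x hx
    rw [hmem] at hx ⊢
    exact fun W => ((hFamMem W.1).mp W.2).2 a ha x (hx W)
  have hle : ∀ {i j : V} (b : i ⟶ j), U0 i ≤ (U0 j).comap (X.map b) :=
    fun {i j} b x hx => hsat1 b x hx
  let X' : QRep.{w} K V :=
    { space := fun v => X.space v ⧸ U0 v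
      isAddCommGroup := fun v => inferInstance
      isModule := fun v => inferInstance
      map := fun {i j} b => Submodule.mapQ (U0 i) (U0 j) (X.map b) (hle b) }
  let π : QRepHom X X' :=
    ⟨fun v => (U0 v).mkQ,
     fun {i j} b => Submodule.mapQ_mkQ (U0 i) (U0 j) (X.map b) (h := hle b)⟩
  refine ⟨X', fun v => inferInstance, π, ?_, ?_⟩
  · -- injectivity on I-arrows
    intro i j a ha p q hpq
    obtain ⟨x, rfl⟩ := Submodule.Quotient.mk_surjective (U0 i) p
    obtain ⟨y, rfl⟩ := Submodule.Quotient.mk_surjective (U0 i) q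
    have hpq' : Submodule.Quotient.mk (X.map a x) =
        (Submodule.Quotient.mk (X.map a y) : X.space j ⧸ U0 j) := hpq
    rw [Submodule.Quotient.eq, ← map_sub] at hpq'
    exact (Submodule.Quotient.eq _).mpr (hsat2 a ha _ hpq')
  · -- factorization
    intro Z hZ g
    have hWF : (fun v : V => LinearMap.ker (g.app v)) ∈ Fam := by
      rw [hFamMem]
      constructor
      · intro i j b x hx
        simp only [LinearMap.mem_ker] at hx ⊢
        have := LinearMap.congr_fun (g.comm b) x
        simp only [LinearMap.coe_comp, Function.comp_apply] at this
        rw [← this, hx, map_zero]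
      · intro i j a ha x hx
        simp only [LinearMap.mem_ker] at hx ⊢
        have := LinearMap.congr_fun (g.comm a) x
        simp only [LinearMap.coe_comp, Function.comp_apply] at this
        apply hZ a ha
        rw [this, hx, map_zero]
    have hker : ∀ v : V, U0 v ≤ LinearMap.ker (g.app v) := by
      intro v x hx
      exact (hmem v x).mp hx ⟨_, hWF⟩
    refine ⟨⟨fun v => Submodule.liftQ (U0 v) (g.app v) (hker v), fun {i j} b => ?_⟩, ?_⟩
    · apply Submodule.linearMap_qext
      rw [LinearMap.comp_assoc, Submodule.liftQ_mkQ]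
      have h2 : (X'.map b).comp (U0 i).mkQ = (U0 j).mkQ.comp (X.map b) :=
        Submodule.mapQ_mkQ (U0 i) (U0 j) (X.map b) (h := hle b)
      rw [LinearMap.comp_assoc, h2, ← LinearMap.comp_assoc, Submodule.liftQ_mkQ]
      exact g.comm b
    · intro v
      exact Submodule.liftQ_mkQ _ _ _

end Quot


section Main

variable {K : Type u} [Field K]
variable (S)

abbrev PIdx (v : V) : Type (v+1) := Σ u : V, {p : W S u v // W.Adm p}

abbrev Ysp (X' : QRep.{max w v} K V) (v : V) : Type (max w (v+1)) :=
  ∀ x : PIdx S v, X'.space x.1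

variable (X' : QRep.{max w v} K V)

noncomputable def sing {v : V} (x : PIdx S v) : X'.space x.1 →ₗ[K] Ysp S X' v :=
  LinearMap.single K (fun y : PIdx S v => X'.space y.1) x

def prj {v : V} (x : PIdx S v) : Ysp S X' v →ₗ[K] X'.space x.1 :=
  LinearMap.proj x

/-- The "main" component of the map of `Y` along `b`, into the summand indexed by a
walk `q` at `j`:  for `q = nil` it is the original map of `X'`, for `q = fwd p b` it
is the identity from the summand `p`, otherwise `0`. -/
noncomputable def YcompMain {i j : V} (b : i ⟶ j) :
    ∀ {u : V} (q : W S u j), W.Adm q → (Ysp S X' i →ₗ[K] X'.space u)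
  | _, .nil _, _ => (X'.map b).comp (prj S X' ⟨i, .nil i, W.adm_nil i⟩)
  | u, @W.fwd _ _ _ _ i₂ _ p c, hq =>
      if h : (⟨i₂, j, c⟩ : QArrow V) = ⟨i, j, b⟩ then
        prj S X' ⟨u, W.castLoc (congrArg Sigma.fst h) p,
          W.castLoc_adm _ p (W.adm_of_fwd hq).1⟩
      else 0
  | _, .bwd _ _ _, _ => 0

/-- The "backward" component: if `b ∈ S`, the summand indexed by a walk `q` at `j`
receives the summand indexed by `q·b⁻¹` at `i` identically. -/
noncomputable def YcompBwd {i j : V} (b : i ⟶ j) (x : PIdx S j) :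
    Ysp S X' i →ₗ[K] X'.space x.1 :=
  if hb : b ∈ S i j then
    if hnf : W.NotFwdEnd x.2.1 b then
      prj S X' ⟨x.1, W.bwd x.2.1 b hb, W.adm_bwd b hb x.2.2 hnf⟩
    else 0
  else 0

noncomputable def Ymap {i j : V} (b : i ⟶ j) : Ysp S X' i →ₗ[K] Ysp S X' j :=
  LinearMap.pi (fun x : PIdx S j => YcompMain S X' b x.2.1 x.2.2 + YcompBwd S X' b x)

noncomputable def YQ : QRep.{max w (v+1)} K V :=
  { space := Ysp S X' 
    isAddCommGroup := fun v => inferInstance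
    isModule := fun v => inferInstance
    map := fun {i j} b => Ymap S X' b }


namespace W
variable {S}
lemma toList_ne_nil_of_notNil {u v : V} {p : W S u v} (h : NotNil p) :
    p.toList ≠ [] := by
  cases p with
  | nil => simp [NotNil] at h
  | fwd p b => simp [toList]
  | bwd p s hs => simp [toList]
end W

lemma pidx_eq_iff {v : V} (x y : PIdx S v) : x = y ↔ x.2.1.toList = y.2.1.toList := by
  constructor
  · rintro rfl; rfl
  · intro h
    obtain ⟨u, p, hp⟩ := x; obtain ⟨u', q, hq⟩ := y
    obtain ⟨hu, hpq⟩ := W.toList_inj p q h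
    subst hu
    have hpq' := eq_of_heq hpq; subst hpq'
    rfl

lemma pidx_ne {v : V} {x y : PIdx S v} (h : x.2.1.toList ≠ y.2.1.toList) : x ≠ y := by
  rw [Ne, pidx_eq_iff]; exact h

lemma sing_apply_same {v : V} (x : PIdx S v) (ξ : X'.space x.1) :
    sing S X' x ξ x = ξ :=
  Pi.single_eq_same (M := fun y : PIdx S v => X'.space y.1) x ξ

lemma sing_apply_ne {v : V} {x y : PIdx S v} (h : y ≠ x) (ξ : X'.space x.1) :
    sing S X' x ξ y = 0 :=
  Pi.single_eq_of_ne (M := fun y : PIdx S v => X'.space y.1) h ξ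

lemma prj_sing_ne {v : V} {x y : PIdx S v} (h : y ≠ x) (ξ : X'.space x.1) :
    prj S X' y (sing S X' x ξ) = 0 := sing_apply_ne S X' h ξ

lemma prj_sing_same {v : V} (x : PIdx S v) (ξ : X'.space x.1) :
    prj S X' x (sing S X' x ξ) = ξ := sing_apply_same S X' x ξ

lemma list_ne_cons {α : Type _} (l : List α) (x : α) : l ≠ x :: l := by
  intro h
  have := congrArg List.length h
  simp at this

lemma Ymap_apply {i j : V} (b : i ⟶ j) (f : Ysp S X' i) (x : PIdx S j) :
    Ymap S X' b f x = YcompMain S X' b x.2.1 x.2.2 f + YcompBwd S X' b x f := rfl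

lemma YcompMain_nil {i j : V} (b : i ⟶ j) (hq : W.Adm (.nil j : W S j j)) :
    YcompMain S X' b (.nil j) hq = (X'.map b).comp (prj S X' ⟨i, .nil i, W.adm_nil i⟩) := rfl

lemma YcompMain_fwd {i j u i₂ : V} (b : i ⟶ j) (p : W S u i₂) (c : i₂ ⟶ j)
    (hq : W.Adm (p.fwd c)) :
    YcompMain S X' b (p.fwd c) hq =
      if h : (⟨i₂, j, c⟩ : QArrow V) = ⟨i, j, b⟩ then
        prj S X' ⟨u, W.castLoc (congrArg Sigma.fst h) p,
          W.castLoc_adm _ p (W.adm_of_fwd hq).1⟩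
      else 0 := rfl

lemma YcompMain_bwd {i j u j₂ : V} (b : i ⟶ j) (p : W S u j₂) (s : j ⟶ j₂)
    (hs : s ∈ S j j₂) (hq : W.Adm (p.bwd s hs)) :
    YcompMain S X' b (p.bwd s hs) hq = 0 := rfl

/-- If the candidate backward-source index differs from the `sing` index, the backward
component vanishes. -/
lemma YcompBwd_sing_zero {i j : V} (b : i ⟶ j) (x : PIdx S j) (y : PIdx S i)
    (ξ : X'.space y.1)
    (h : ∀ hb : b ∈ S i j,
      y.2.1.toList ≠ Sum.inr ⟨⟨i, j, b⟩, hb⟩ :: x.2.1.toList) :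
    YcompBwd S X' b x (sing S X' y ξ) = 0 := by
  unfold YcompBwd
  split
  · next hb =>
      split
      · next hnf =>
          refine prj_sing_ne S X' (Ne.symm (pidx_ne S ?_)) ξ
          simp only [W.toList]
          exact h hb
      · rfl
  · rfl

/-- If the backward-source index coincides, the backward component is the projection. -/
lemma YcompBwd_sing_same {i j : V} (b : i ⟶ j) (hb : b ∈ S i j)
    {u : V} (q : W S u j) (hq : W.Adm q) (hnf : W.NotFwdEnd q b)
    (ξ : X'.space u) :
    YcompBwd S X' b ⟨u, q, hq⟩
      (sing S X' ⟨u, W.bwd q b hb, W.adm_bwd b hb hq hnf⟩ ξ) = ξ := by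
  unfold YcompBwd
  rw [dif_pos hb, dif_pos hnf]
  exact prj_sing_same S X' ⟨u, W.bwd q b hb, W.adm_bwd b hb hq hnf⟩ ξ


namespace W
variable {S}

lemma toList_ne_inr_of_notBwdEnd {u i j : V} {p : W S u i} {b : i ⟶ j}
    (h : NotBwdEnd p b) (hb : b ∈ S i j) (l : List (QStep S)) :
    p.toList ≠ Sum.inr ⟨⟨i, j, b⟩, hb⟩ :: l := by
  cases p with
  | nil => simp [toList]
  | fwd p c => simp [toList]
  | bwd p c hc =>
      simp only [NotBwdEnd] at h
      simp only [toList]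
      intro hEq
      rw [List.cons_eq_cons] at hEq
      injection hEq.1 with h1
      exact h (congrArg Subtype.val h1)

lemma toList_ne_inl_of_notFwdEnd {u i j : V} {q : W S u j} {s : i ⟶ j}
    (h : NotFwdEnd q s) (l : List (QStep S)) :
    q.toList ≠ Sum.inl ⟨i, j, s⟩ :: l := by
  cases q with
  | nil => simp [toList]
  | bwd p c hc => simp [toList]
  | fwd p c =>
      simp only [NotFwdEnd] at h
      simp only [toList]
      intro hEq
      rw [List.cons_eq_cons] at hEq
      injection hEq.1 with h1
      exact h h1

end W

lemma prj_sing_same' {v u : V} (p : W S u v) (hp hp' : W.Adm p) (ξ : X'.space u) :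
    prj S X' ⟨u, p, hp⟩ (sing S X' ⟨u, p, hp'⟩ ξ) = ξ :=
  prj_sing_same S X' ⟨u, p, hp⟩ ξ

lemma prj_sing_ne' {v u u' : V} (q : W S u' v) (hq : W.Adm q) (p : W S u v)
    (hp : W.Adm p) (h : q.toList ≠ p.toList) (ξ : X'.space u) :
    prj S X' ⟨u', q, hq⟩ (sing S X' ⟨u, p, hp⟩ ξ) = 0 := by
  have hne : (⟨u', q, hq⟩ : PIdx S v) ≠ ⟨u, p, hp⟩ := pidx_ne S h
  exact prj_sing_ne S X' hne ξ

lemma sing_apply_same' {v u : V} (p : W S u v) (hp hp' : W.Adm p) (ξ : X'.space u) :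
    sing S X' ⟨u, p, hp⟩ ξ ⟨u, p, hp'⟩ = ξ :=
  sing_apply_same S X' ⟨u, p, hp⟩ ξ

lemma sing_apply_ne' {v u u' : V} (p : W S u v) (hp : W.Adm p) (q : W S u' v)
    (hq : W.Adm q) (h : q.toList ≠ p.toList) (ξ : X'.space u) :
    sing S X' ⟨u, p, hp⟩ ξ ⟨u', q, hq⟩ = 0 := by
  have hne : (⟨u', q, hq⟩ : PIdx S v) ≠ ⟨u, p, hp⟩ := pidx_ne S h
  exact sing_apply_ne S X' hne ξ

lemma Ymap_apply' {i j u : V} (b : i ⟶ j) (f : Ysp S X' i) (q : W S u j)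
    (hq : W.Adm q) :
    Ymap S X' b f ⟨u, q, hq⟩ =
      YcompMain S X' b q hq f + YcompBwd S X' b ⟨u, q, hq⟩ f := rfl

lemma YcompBwd_sing_zero' {i j u : V} (b : i ⟶ j) (x : PIdx S j) (p : W S u i)
    (hp : W.Adm p) (ξ : X'.space u)
    (h : ∀ hb : b ∈ S i j,
      p.toList ≠ Sum.inr ⟨⟨i, j, b⟩, hb⟩ :: x.2.1.toList) :
    YcompBwd S X' b x (sing S X' ⟨u, p, hp⟩ ξ) = 0 := by
  unfold YcompBwd
  split
  · next hb =>
      split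
      · next hnf =>
          refine prj_sing_ne' S X' _ _ _ _ ?_ ξ
          simp only [W.toList]
          exact (h hb).symm
      · rfl
  · rfl

namespace W
variable {S}

lemma notFwdEnd_nil {i j : V} (s : i ⟶ j) : NotFwdEnd (.nil j : W S j j) s := by
  simp only [NotFwdEnd]

lemma notFwdEnd_bwd {u i j j₂ : V} (r : W S u j₂) (s' : j ⟶ j₂) (hs' : s' ∈ S j j₂)
    (s : i ⟶ j) : NotFwdEnd (r.bwd s' hs') s := by
  simp only [NotFwdEnd]

lemma notFwdEnd_fwd_of_ne {u i i₃ j : V} (r : W S u i₃) (c : i₃ ⟶ j) (s : i ⟶ j)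
    (h : (⟨i₃, j, c⟩ : QArrow V) ≠ ⟨i, j, s⟩) : NotFwdEnd (r.fwd c) s := by
  simp only [NotFwdEnd]; exact h

lemma notFwdEnd_fwd_self {u i j : V} (r : W S u i) (c : i ⟶ j) :
    ¬ NotFwdEnd (r.fwd c) c := by
  simp only [NotFwdEnd]
  intro h; exact h rfl

end W

lemma W.castLoc_self {u i : V} (h : i = i) (p : W S u i) :
    W.castLoc (S := S) h p = p := rfl

lemma YcompBwd_notFwd_zero {i j : V} (b : i ⟶ j) (x : PIdx S j)
    (hnf : ¬ W.NotFwdEnd x.2.1 b) (f : Ysp S X' i) :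
    YcompBwd S X' b x f = 0 := by
  unfold YcompBwd
  by_cases hb : b ∈ S i j
  · rw [dif_pos hb, dif_neg hnf]; rfl
  · rw [dif_neg hb]; rfl

lemma YcompBwd_sing_pos {i j u₂ u : V} (b : i ⟶ j) (hb : b ∈ S i j)
    (r : W S u₂ j) (hr : W.Adm r) (hnf' : W.NotFwdEnd r b)
    (p : W S u i) (hp : W.Adm p) (ξ : X'.space u) :
    YcompBwd S X' b ⟨u₂, r, hr⟩ (sing S X' ⟨u, p, hp⟩ ξ) =
      prj S X' ⟨u₂, W.bwd r b hb, W.adm_bwd b hb hr hnf'⟩ (sing S X' ⟨u, p, hp⟩ ξ) := by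
  unfold YcompBwd
  rw [dif_pos hb, dif_pos hnf']

/-- Computation of `Ymap` on the canonical copy of `X'`. -/
lemma Ymap_sing_nil {i j : V} (b : i ⟶ j) (ξ : X'.space i) :
    Ymap S X' b (sing S X' ⟨i, .nil i, W.adm_nil i⟩ ξ) =
      sing S X' ⟨j, .nil j, W.adm_nil j⟩ (X'.map b ξ) := by
  funext t
  obtain ⟨u₂, r, hr⟩ := t
  rw [Ymap_apply']
  cases r with
  | nil =>
      rw [YcompMain_nil, LinearMap.comp_apply, prj_sing_same' S X' _ _ _ ξ,
        YcompBwd_sing_zero' S X' b _ _ _ ξ (fun hb => by simp [W.toList]),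
        sing_apply_same' S X' _ _ _ _, add_zero]
  | fwd r c =>
      rw [YcompMain_fwd,
        YcompBwd_sing_zero' S X' b _ _ _ ξ (fun hb => by simp [W.toList]),
        sing_apply_ne' S X' _ _ _ _ (by simp [W.toList]) _]
      by_cases h : (⟨_, j, c⟩ : QArrow V) = ⟨i, j, b⟩
      · rw [dif_pos h,
          prj_sing_ne' S X' _ _ _ _ (by
            rw [W.castLoc_toList]
            simp only [W.toList]
            exact W.toList_ne_nil_of_notNil (W.adm_of_fwd hr).2.1) ξ]
        simp
      · rw [dif_neg h]; simp
  | bwd r s hs =>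
      rw [YcompMain_bwd,
        YcompBwd_sing_zero' S X' b _ _ _ ξ (fun hb => by simp [W.toList]),
        sing_apply_ne' S X' _ _ _ _ (by simp [W.toList]) _]
      simp

/-- `Ymap` on a summand indexed by a walk that can be extended forward by `b`. -/
lemma Ymap_sing_fwd {i j u : V} (b : i ⟶ j) (p : W S u i) (hp : W.Adm p)
    (hnn : W.NotNil p) (hnb : W.NotBwdEnd p b) (ξ : X'.space u) :
    Ymap S X' b (sing S X' ⟨u, p, hp⟩ ξ) =
      sing S X' ⟨u, p.fwd b, W.adm_fwd b hp hnn hnb⟩ ξ := by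
  funext t
  obtain ⟨u₂, r, hr⟩ := t
  rw [Ymap_apply']
  cases r with
  | nil =>
      rw [YcompMain_nil, LinearMap.comp_apply,
        prj_sing_ne' S X' _ _ _ _ (by
          simp only [W.toList]
          exact (W.toList_ne_nil_of_notNil hnn).symm) ξ,
        map_zero,
        YcompBwd_sing_zero' S X' b _ _ _ ξ
          (fun hb => W.toList_ne_inr_of_notBwdEnd hnb hb _),
        sing_apply_ne' S X' _ _ _ _ (by simp [W.toList]) ξ]
      simp
  | fwd r c =>
      rw [YcompMain_fwd,
        YcompBwd_sing_zero' S X' b _ _ _ ξ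
          (fun hb => W.toList_ne_inr_of_notBwdEnd hnb hb _)]
      by_cases h : (⟨_, j, c⟩ : QArrow V) = ⟨i, j, b⟩
      · have hi : _ = i := congrArg Sigma.fst h
        subst hi
        have hcb : c = b := by
          obtain ⟨-, h2⟩ := Sigma.mk.inj_iff.mp h
          obtain ⟨-, h3⟩ := Sigma.mk.inj_iff.mp (eq_of_heq h2)
          exact eq_of_heq h3
        subst hcb
        rw [dif_pos h]
        by_cases hqp : r.toList = p.toList
        · obtain ⟨hu, hpq⟩ := W.toList_inj r p hqp
          subst hu
          have hep := eq_of_heq hpq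
          subst hep
          simp only [W.castLoc_self]
          rw [add_zero]
          exact (prj_sing_same' S X' r _ hp ξ).trans (sing_apply_same' S X' (r.fwd c) _ _ ξ).symm
        · rw [prj_sing_ne' S X' _ _ _ _ (by
              rw [W.castLoc_toList]; exact hqp) ξ,
            sing_apply_ne' S X' _ _ _ _ (by
              simp only [W.toList]
              intro hEq
              rw [List.cons_eq_cons] at hEq
              exact hqp hEq.2) ξ]
          simp
      · rw [dif_neg h,
          sing_apply_ne' S X' _ _ _ _ (by
            simp only [W.toList]
            intro hEq
            rw [List.cons_eq_cons] at hEq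
            exact h (Sum.inl.inj hEq.1)) ξ]
        simp
  | bwd r s hs =>
      rw [YcompMain_bwd,
        YcompBwd_sing_zero' S X' b _ _ _ ξ
          (fun hb => W.toList_ne_inr_of_notBwdEnd hnb hb _),
        sing_apply_ne' S X' _ _ _ _ (by simp [W.toList]) ξ]
      simp

/-- `Ymap` on a summand indexed by a walk ending with a backward step along `b`. -/
lemma Ymap_sing_bwd {i j u : V} (b : i ⟶ j) (hb : b ∈ S i j) (q : W S u j)
    (hq : W.Adm q) (hnf : W.NotFwdEnd q b) (ξ : X'.space u) :
    Ymap S X' b (sing S X' ⟨u, W.bwd q b hb, W.adm_bwd b hb hq hnf⟩ ξ) =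
      sing S X' ⟨u, q, hq⟩ ξ := by
  funext t
  obtain ⟨u₂, r, hr⟩ := t
  rw [Ymap_apply']
  cases r with
  | nil =>
      rw [YcompMain_nil, LinearMap.comp_apply,
        prj_sing_ne' S X' _ _ _ _ (by simp [W.toList]) ξ, map_zero, zero_add,
        YcompBwd_sing_pos S X' b hb _ _ (W.notFwdEnd_nil b) _ _ ξ]
      by_cases e : q.toList = List.nil
      · obtain ⟨hu, hpq⟩ := W.toList_inj q (W.nil j) (by simpa [W.toList] using e)
        subst hu
        have hep := eq_of_heq hpq
        subst hep
        rw [prj_sing_same' S X' _ _ _ ξ, sing_apply_same' S X' _ _ _ ξ]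
      · rw [prj_sing_ne' S X' _ _ _ _ (by
            simp only [W.toList]
            intro hEq
            rw [List.cons_eq_cons] at hEq
            exact e hEq.2.symm) ξ,
          sing_apply_ne' S X' _ _ _ _ (by
            simp only [W.toList]
            exact fun hEq => e hEq.symm) ξ]
  | @fwd i₃ _ r c =>
      rw [YcompMain_fwd]
      by_cases h : (⟨i₃, j, c⟩ : QArrow V) = ⟨i, j, b⟩
      · have hi : i₃ = i := congrArg Sigma.fst h
        subst hi
        have hcb : c = b := by
          obtain ⟨-, h2⟩ := Sigma.mk.inj_iff.mp h
          obtain ⟨-, h3⟩ := Sigma.mk.inj_iff.mp (eq_of_heq h2)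
          exact eq_of_heq h3
        subst hcb
        rw [dif_pos h,
          prj_sing_ne' S X' _ _ _ _ (by
            rw [W.castLoc_toList]
            simp only [W.toList]
            exact W.toList_ne_inr_of_notBwdEnd (W.adm_of_fwd hr).2.2 hb _) ξ,
          YcompBwd_notFwd_zero S X' c _ (W.notFwdEnd_fwd_self r c) _,
          sing_apply_ne' S X' _ _ _ _ (by
            simp only [W.toList]
            exact (W.toList_ne_inl_of_notFwdEnd hnf _).symm) ξ]
        simp
      · rw [dif_neg h,
          YcompBwd_sing_pos S X' b hb _ _ (W.notFwdEnd_fwd_of_ne r c b h) _ _ ξ]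
        by_cases e : (r.fwd c).toList = q.toList
        · obtain ⟨hu, hpq⟩ := W.toList_inj (r.fwd c) q e
          subst hu
          have hep := eq_of_heq hpq
          subst hep
          rw [prj_sing_same' S X' _ _ _ ξ, sing_apply_same' S X' _ _ _ ξ]
          simp
        · rw [prj_sing_ne' S X' _ _ _ _ (by
              simp only [W.toList]
              intro hEq
              rw [List.cons_eq_cons] at hEq
              exact e (by simp only [W.toList]; exact hEq.2)) ξ,
            sing_apply_ne' S X' _ _ _ _ (by
              intro hEq
              exact e hEq) ξ]
          simp
  | @bwd _ j₃ r s' hs' =>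
      rw [YcompMain_bwd,
        YcompBwd_sing_pos S X' b hb _ _ (W.notFwdEnd_bwd r s' hs' b) _ _ ξ]
      by_cases e : (r.bwd s' hs').toList = q.toList
      · obtain ⟨hu, hpq⟩ := W.toList_inj (r.bwd s' hs') q e
        subst hu
        have hep := eq_of_heq hpq
        subst hep
        rw [prj_sing_same' S X' _ _ _ ξ, sing_apply_same' S X' _ _ _ ξ]
        simp
      · rw [prj_sing_ne' S X' _ _ _ _ (by
            simp only [W.toList]
            intro hEq
            rw [List.cons_eq_cons] at hEq
            exact e (by simp only [W.toList]; exact hEq.2)) ξ,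
          sing_apply_ne' S X' _ _ _ _ (by
            intro hEq
            exact e hEq) ξ]
        simp


namespace W
variable {S}

lemma notNil_fwd {u i j : V} (p : W S u i) (b : i ⟶ j) : NotNil (p.fwd b) := by
  simp only [NotNil]

lemma notNil_bwd {u i j : V} (p : W S u j) (s : i ⟶ j) (hs : s ∈ S i j) :
    NotNil (p.bwd s hs) := by
  simp only [NotNil]

lemma notBwdEnd_of_not_mem {u i j : V} (p : W S u i) (a : i ⟶ j)
    (hA : a ∉ S i j) : NotBwdEnd p a := by
  cases p with
  | nil => simp only [NotBwdEnd]
  | fwd q c => simp only [NotBwdEnd]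
  | bwd q c hc =>
      simp only [NotBwdEnd]
      intro hEq
      obtain ⟨-, h2⟩ := Sigma.mk.inj_iff.mp hEq
      obtain ⟨hj, h3⟩ := Sigma.mk.inj_iff.mp (eq_of_heq h2)
      subst hj
      have h4 := eq_of_heq h3
      subst h4
      exact hA hc

lemma exists_of_notNotFwdEnd {u i j : V} {q : W S u j} {s : i ⟶ j}
    (h : ¬ NotFwdEnd q s) : ∃ r : W S u i, q = r.fwd s := by
  cases q with
  | nil => simp only [NotFwdEnd, not_true] at h
  | bwd r c hc => simp only [NotFwdEnd, not_true] at h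
  | fwd r c =>
      simp only [NotFwdEnd, not_not] at h
      obtain ⟨hi, h2⟩ := Sigma.mk.inj_iff.mp h
      subst hi
      obtain ⟨-, h3⟩ := Sigma.mk.inj_iff.mp (eq_of_heq h2)
      have h4 := eq_of_heq h3
      subst h4
      exact ⟨r, rfl⟩

lemma exists_of_notNotBwdEnd {u i j : V} {p : W S u i} {b : i ⟶ j}
    (h : ¬ NotBwdEnd p b) : ∃ (q : W S u j) (hb : b ∈ S i j), p = q.bwd b hb := by
  cases p with
  | nil => simp only [NotBwdEnd, not_true] at h
  | fwd r c => simp only [NotBwdEnd, not_true] at h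
  | bwd q c hc =>
      simp only [NotBwdEnd, not_not] at h
      obtain ⟨-, h2⟩ := Sigma.mk.inj_iff.mp h
      obtain ⟨hj, h3⟩ := Sigma.mk.inj_iff.mp (eq_of_heq h2)
      subst hj
      have h4 := eq_of_heq h3
      subst h4
      exact ⟨q, hc, rfl⟩

end W

lemma YcompBwd_notS_zero {i j : V} (b : i ⟶ j) (hb : b ∉ S i j) (x : PIdx S j)
    (f : Ysp S X' i) : YcompBwd S X' b x f = 0 := by
  unfold YcompBwd
  rw [dif_neg hb]
  rfl

lemma prj_apply {v : V} (x : PIdx S v) (f : Ysp S X' v) : prj S X' x f = f x := rfl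

/-- `Ymap` is injective on arrows not in `S` whose `X'`-map is injective. -/
lemma Ymap_inj {i j : V} (a : i ⟶ j) (ha : Function.Injective (X'.map a))
    (haS : a ∉ S i j) : Function.Injective (Ymap S X' a) := by
  intro f g h
  funext x
  obtain ⟨u, p, hp⟩ := x
  cases p with
  | nil =>
      have h1 := congrFun h ⟨j, .nil j, W.adm_nil j⟩
      rw [Ymap_apply', Ymap_apply', YcompMain_nil,
        YcompBwd_notS_zero S X' a haS, YcompBwd_notS_zero S X' a haS,
        add_zero, add_zero, LinearMap.comp_apply, LinearMap.comp_apply] at h1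
      exact ha h1
  | fwd r c =>
      have h1 := congrFun h ⟨u, (r.fwd c).fwd a,
        W.adm_fwd a hp (W.notNil_fwd r c) (by simp only [W.NotBwdEnd])⟩
      rw [Ymap_apply', Ymap_apply', YcompMain_fwd, dif_pos rfl,
        YcompBwd_notS_zero S X' a haS, YcompBwd_notS_zero S X' a haS,
        add_zero, add_zero] at h1
      simp only [W.castLoc_self, prj_apply] at h1
      exact h1
  | bwd r c hc =>
      have h1 := congrFun h ⟨u, (r.bwd c hc).fwd a,
        W.adm_fwd a hp (W.notNil_bwd r c hc) (W.notBwdEnd_of_not_mem _ a haS)⟩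
      rw [Ymap_apply', Ymap_apply', YcompMain_fwd, dif_pos rfl,
        YcompBwd_notS_zero S X' a haS, YcompBwd_notS_zero S X' a haS,
        add_zero, add_zero] at h1
      simp only [W.castLoc_self, prj_apply] at h1
      exact h1

/-- `Ymap` is surjective on arrows of `S`. -/
lemma Ymap_surj {i j : V} (s : i ⟶ j) (hs : s ∈ S i j)
    [Fintype (PIdx S j)] : Function.Surjective (Ymap S X' s) := by
  intro g
  have hsum : g = ∑ t : PIdx S j, sing S X' t (g t) := by
    funext t'
    rw [Finset.sum_apply]
    rw [Finset.sum_eq_single t']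
    · rw [sing_apply_same]
    · intro t _ hne
      exact sing_apply_ne S X' (Ne.symm hne) (g t)
    · intro habs
      exact absurd (Finset.mem_univ t') habs
  rw [hsum]
  have hmem : ∀ t : PIdx S j, ∃ f, Ymap S X' s f = sing S X' t (g t) := by
    intro t
    obtain ⟨u, q, hq⟩ := t
    by_cases hnf : W.NotFwdEnd q s
    · exact ⟨sing S X' ⟨u, W.bwd q s hs, W.adm_bwd s hs hq hnf⟩ (g ⟨u, q, hq⟩),
        Ymap_sing_bwd S X' s hs q hq hnf _⟩
    · obtain ⟨r, rfl⟩ := W.exists_of_notNotFwdEnd hnf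
      obtain ⟨h1, h2, h3⟩ := W.adm_of_fwd hq
      exact ⟨sing S X' ⟨u, r, h1⟩ (g ⟨u, r.fwd s, hq⟩),
        Ymap_sing_fwd S X' s r h1 h2 h3 _⟩
  choose F hF using hmem
  exact ⟨∑ t : PIdx S j, F t, by rw [map_sum]; exact Finset.sum_congr rfl (fun t _ => hF t)⟩


variable (Z : QRep.{max w v} K V) (g' : QRepHom X' Z)
variable (σ : ∀ {i j : V} (s : i ⟶ j), s ∈ S i j → (Z.space j →ₗ[K] Z.space i))

/-- The factoring morphism on the summand indexed by a walk. -/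
noncomputable def eta {u : V} : ∀ {v' : V}, W S u v' → (X'.space u →ₗ[K] Z.space v')
  | _, .nil _ => g'.app u
  | _, .fwd p b => (Z.map b).comp (eta p)
  | _, .bwd p s hs => (σ s hs).comp (eta p)

noncomputable def happ [∀ v' : V, Fintype (PIdx S v')] (v' : V) :
    Ysp S X' v' →ₗ[K] Z.space v' :=
  ∑ x : PIdx S v', (eta S X' Z g' σ x.2.1).comp (prj S X' x)

lemma happ_sing [∀ v' : V, Fintype (PIdx S v')] (v' : V) (x : PIdx S v')
    (ξ : X'.space x.1) :
    happ S X' Z g' σ v' (sing S X' x ξ) = eta S X' Z g' σ x.2.1 ξ := by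
  unfold happ
  rw [LinearMap.sum_apply, Finset.sum_eq_single x]
  · rw [LinearMap.comp_apply, prj_sing_same]
  · intro y _ hne
    rw [LinearMap.comp_apply, prj_sing_ne S X' hne, map_zero]
  · intro habs
    exact absurd (Finset.mem_univ x) habs

lemma happ_comm [∀ v' : V, Fintype (PIdx S v')]
    (hσ : ∀ {i j : V} (s : i ⟶ j) (hs : s ∈ S i j),
      (Z.map s).comp (σ s hs) = LinearMap.id)
    {i j : V} (b : i ⟶ j) :
    (Z.map b).comp (happ S X' Z g' σ i) =
      (happ S X' Z g' σ j).comp (Ymap S X' b) := by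
  apply LinearMap.pi_ext
  intro x ξ
  have hsing : (Pi.single x ξ : Ysp S X' i) = sing S X' x ξ := rfl
  simp only [LinearMap.comp_apply, hsing]
  obtain ⟨u, p, hp⟩ := x
  cases p with
  | nil =>
      rw [happ_sing, Ymap_sing_nil, happ_sing]
      simp only [eta]
      exact LinearMap.congr_fun (g'.comm b) ξ
  | fwd r c =>
      rw [happ_sing,
        Ymap_sing_fwd S X' b (r.fwd c) hp (W.notNil_fwd r c)
          (by simp only [W.NotBwdEnd]) ξ,
        happ_sing]
      simp only [eta, LinearMap.comp_apply]
  | bwd r c hc =>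
      by_cases hnb : W.NotBwdEnd (r.bwd c hc) b
      · rw [happ_sing,
          Ymap_sing_fwd S X' b (r.bwd c hc) hp (W.notNil_bwd r c hc) hnb ξ,
          happ_sing]
        simp only [eta, LinearMap.comp_apply]
      · simp only [W.NotBwdEnd, not_not] at hnb
        obtain ⟨-, h2⟩ := Sigma.mk.inj_iff.mp hnb
        obtain ⟨hj, h3⟩ := Sigma.mk.inj_iff.mp (eq_of_heq h2)
        subst hj
        have h4 := eq_of_heq h3
        subst h4
        obtain ⟨hq, hnf⟩ := W.adm_of_bwd hp
        rw [happ_sing, Ymap_sing_bwd S X' c hc r hq hnf ξ, happ_sing]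
        simp only [eta, LinearMap.comp_apply]
        have h5 := LinearMap.congr_fun (hσ c hc) (eta S X' Z g' σ r ξ)
        simpa using h5

/-- The key construction: the left `Rep^{I,S}`-approximation of a representation
whose `I`-arrows already act injectively. -/
lemma exists_approx [Fintype V] [∀ i j : V, Fintype (i ⟶ j)]
    [hfd : ∀ i : V, FiniteDimensional K (X'.space i)]
    (I : ∀ i j : V, Set (i ⟶ j))
    (hdisj : ∀ i j : V, Disjoint (I i j) (S i j))
    (hS : IsEmpty (OrientedCycle S))
    (hinj : ∀ {i j : V} (a : i ⟶ j), a ∈ I i j → Function.Injective (X'.map a)) :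
    ∃ (Y : QRep.{max w v} K V) (_ : ∀ i, FiniteDimensional K (Y.space i))
      (ι : QRepHom X' Y), MemRepIS I S Y ∧
      ∀ (Z : QRep.{max w v} K V), MemRepIS I S Z →
        ∀ g' : QRepHom X' Z, ∃ h : QRepHom Y Z,
          ∀ v : V, (h.app v).comp (ι.app v) = g'.app v := by
  classical
  haveI hfin : ∀ v' : V, Fintype (PIdx S v') := fun v' =>
    @Fintype.ofFinite _ (W.finite_adm hS v')
  let e : ∀ v' : V, Shrink.{max w v} (Ysp S X' v') ≃ₗ[K] Ysp S X' v' :=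
    fun v' => Shrink.linearEquiv K _
  let Y : QRep.{max w v} K V :=
    { space := fun v' => Shrink.{max w v} (Ysp S X' v')
      isAddCommGroup := fun v' => inferInstance
      isModule := fun v' => inferInstance
      map := fun {i j} b =>
        ((e j).symm.toLinearMap.comp (Ymap S X' b)).comp (e i).toLinearMap }
  refine ⟨Y, ?_,
    ⟨fun v' => (e v').symm.toLinearMap.comp (sing S X' ⟨v', .nil v', W.adm_nil v'⟩),
      fun {i j} b => ?_⟩,
    ⟨?_, ?_⟩, ?_⟩
  · intro v'
    haveI : ∀ x : PIdx S v', Module.Finite K (X'.space x.1) := fun x => inferInstance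
    haveI : Module.Finite K (Ysp S X' v') := Module.Finite.pi
    exact Module.Finite.equiv (e v').symm
  · apply LinearMap.ext
    intro ξ
    simp only [Y, LinearMap.comp_apply, LinearEquiv.coe_coe, LinearEquiv.apply_symm_apply]
    rw [Ymap_sing_nil S X' b ξ]
  · intro i j a haI
    show Function.Injective
      (((e j).symm.toLinearMap.comp (Ymap S X' a)).comp (e i).toLinearMap)
    simp only [LinearMap.coe_comp, LinearEquiv.coe_coe]
    exact (e j).symm.injective.comp
      ((Ymap_inj S X' a (hinj a haI) (Set.disjoint_left.mp (hdisj i j) haI)).comp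
        (e i).injective)
  · intro i j s hsS
    show Function.Surjective
      (((e j).symm.toLinearMap.comp (Ymap S X' s)).comp (e i).toLinearMap)
    simp only [LinearMap.coe_comp, LinearEquiv.coe_coe]
    exact (e j).symm.surjective.comp ((Ymap_surj S X' s hsS).comp (e i).surjective)
  · intro Z hZ g'
    have hsec : ∀ (i j : V) (s : i ⟶ j), s ∈ S i j →
        ∃ σs : Z.space j →ₗ[K] Z.space i, (Z.map s).comp σs = LinearMap.id := by
      intro i j s hs
      exact (Z.map s).exists_rightInverse_of_surjective
        (LinearMap.range_eq_top.mpr (hZ.2 s hs))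
    choose σ0 hσ0 using hsec
    refine ⟨⟨fun v' => (happ S X' Z g' (fun {i j} s hs => σ0 i j s hs) v').comp
        (e v').toLinearMap, fun {i j} b => ?_⟩, ?_⟩
    · apply LinearMap.ext
      intro y
      have h7 := LinearMap.congr_fun (happ_comm S X' Z g' (fun {i j} s hs => σ0 i j s hs)
          (fun {i j} s hs => hσ0 i j s hs) b) ((e i) y)
      simp only [LinearMap.comp_apply] at h7
      simp only [Y, LinearMap.comp_apply, LinearEquiv.coe_coe, LinearEquiv.apply_symm_apply]
      exact h7
    intro v'
    apply LinearMap.ext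
    intro ξ
    simp only [LinearMap.comp_apply, LinearEquiv.coe_coe, LinearEquiv.apply_symm_apply]
    have h6 := happ_sing S X' Z g' (fun {i j} s hs => σ0 i j s hs) v'
      ⟨v', .nil v', W.adm_nil v'⟩ ξ
    refine h6.trans ?_
    simp only [eta]

end Main

end CovFin

/-- If `I` and `S` are disjoint sets of arrows of a finite quiver with no oriented
`I`-cycles and no oriented `S`-cycles, then `Rep^{I,S} Q` is covariantly finite in
`Rep Q`: every finite-dimensional representation `X` admits a morphism `f : X → Y`
with `Y ∈ Rep^{I,S} Q` through which every morphism from `X` to an object of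
`Rep^{I,S} Q` factors. -/
theorem repIS_covariantly_finite {K : Type u} [Field K] {V : Type v}
    [Quiver.{v+1} V] [Fintype V] [∀ i j : V, Fintype (i ⟶ j)]
    (I S : ∀ i j : V, Set (i ⟶ j))
    (hdisj : ∀ i j : V, Disjoint (I i j) (S i j))
    (hI : IsEmpty (OrientedCycle I)) (hS : IsEmpty (OrientedCycle S)) :
    ∀ (X : QRep.{max u v} K V) [∀ i, FiniteDimensional K (X.space i)],
      ∃ (Y : QRep.{max u v} K V) (_ : ∀ i, FiniteDimensional K (Y.space i))
        (f : QRepHom X Y), MemRepIS I S Y ∧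
        ∀ (Z : QRep.{max u v} K V) (_ : ∀ i, FiniteDimensional K (Z.space i)),
          MemRepIS I S Z → ∀ g : QRepHom X Z,
            ∃ h : QRepHom Y Z, ∀ i : V, (h.app i).comp (f.app i) = g.app i := by
  intro X instX
  obtain ⟨X', hfd', π, hinj', hfact⟩ := CovFin.exists_I_quotient I X
  haveI : ∀ i : V, FiniteDimensional K (X'.space i) := hfd'
  obtain ⟨Y, hfdY, ι, hY, hfactY⟩ :=
    CovFin.exists_approx S X' I hdisj hS (fun {i j} a ha => hinj' a ha)
  refine ⟨Y, hfdY, ⟨fun v => (ι.app v).comp (π.app v), fun {i j} b => ?_⟩, hY, ?_⟩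
  · rw [← LinearMap.comp_assoc, ι.comm b, LinearMap.comp_assoc, π.comm b,
      ← LinearMap.comp_assoc]
  · intro Z _fdZ hZmem g
    obtain ⟨g', hg'⟩ := hfact Z (fun {i j} a ha => hZmem.1 a ha) g
    obtain ⟨h, hh⟩ := hfactY Z hZmem g'
    refine ⟨h, fun v => ?_⟩
    rw [← LinearMap.comp_assoc, hh v, hg' v]
end
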